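/- Let (π,τ) be of weak dual Roth type with accelerated backward sequence (n̂_k)_{k≤0} (n̂_0 = 0, and each path γ(n̂_{k−1}, n̂_k) is complete), and suppose every complete-path matrix product over 2d−3 consecutive accelerated blocks has all entries ≥ 1. Then for every ε > 0 there exists C' = C'(ε) > 0 such that for all m ≤ 0 and all α, β ∈ A: max(1, B(m,0)_{αβ}) ≥ C' ‖B(m,0)‖^{1−ε}, where B(m,0) is the backward Rauzy–Veech cocycle matrix and ‖B‖ = Σ_{α,β} |B_{αβ}|. -/

import Mathlib

/-- `‖B‖ = Σ_{α,β} |B_{αβ}|` (the norm used for the dual Roth condition). -/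
noncomputable def sumNorm {A : Type*} [Fintype A] (B : Matrix A A ℝ) : ℝ :=
  ∑ α, ∑ β, |B α β|

section Aux
variable {A : Type*} [Fintype A]

lemma sumNorm_nonneg (B : Matrix A A ℝ) : 0 ≤ sumNorm B :=
  Finset.sum_nonneg fun _ _ => Finset.sum_nonneg fun _ _ => abs_nonneg _

lemma sumNorm_eq {B : Matrix A A ℝ} (h : ∀ α β, 0 ≤ B α β) :
    sumNorm B = ∑ α, ∑ β, B α β :=
  Finset.sum_congr rfl fun α _ => Finset.sum_congr rfl fun β _ => abs_of_nonneg (h α β)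

lemma row_sum_le_sumNorm {B : Matrix A A ℝ} (h : ∀ α β, 0 ≤ B α β) (γ : A) :
    ∑ β, B γ β ≤ sumNorm B := by
  rw [sumNorm_eq h]
  exact Finset.single_le_sum
    (fun α _ => Finset.sum_nonneg fun β _ => h α β) (Finset.mem_univ γ)

lemma entry_le_sumNorm {B : Matrix A A ℝ} (h : ∀ α β, 0 ≤ B α β) (α β : A) :
    B α β ≤ sumNorm B :=
  le_trans (Finset.single_le_sum (fun β _ => h α β) (Finset.mem_univ β))
    (row_sum_le_sumNorm h α)

lemma sumNorm_mono {B C : Matrix A A ℝ} (hB : ∀ α β, 0 ≤ B α β)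
    (h : ∀ α β, B α β ≤ C α β) : sumNorm B ≤ sumNorm C := by
  rw [sumNorm_eq hB, sumNorm_eq (fun α β => le_trans (hB α β) (h α β))]
  exact Finset.sum_le_sum fun α _ => Finset.sum_le_sum fun β _ => h α β

lemma sumNorm_mul_le {B C : Matrix A A ℝ} (hB : ∀ α β, 0 ≤ B α β)
    (hC : ∀ α β, 0 ≤ C α β) : sumNorm (B * C) ≤ sumNorm B * sumNorm C := by
  have hBC : ∀ α β, 0 ≤ (B * C) α β := fun α β => by
    rw [Matrix.mul_apply]
    exact Finset.sum_nonneg fun γ _ => mul_nonneg (hB _ _) (hC _ _)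
  rw [sumNorm_eq hBC]
  calc ∑ α, ∑ β, (B * C) α β = ∑ α, ∑ γ, B α γ * ∑ β, C γ β := by
        refine Finset.sum_congr rfl fun α _ => ?_
        simp only [Matrix.mul_apply, Finset.mul_sum]
        rw [Finset.sum_comm]
    _ ≤ ∑ α, ∑ γ, B α γ * sumNorm C := by
        refine Finset.sum_le_sum fun α _ => Finset.sum_le_sum fun γ _ => ?_
        exact mul_le_mul_of_nonneg_left (row_sum_le_sumNorm hC γ) (hB _ _)
    _ = sumNorm B * sumNorm C := by
        rw [sumNorm_eq hB, Finset.sum_mul]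
        exact Finset.sum_congr rfl fun α _ => (Finset.sum_mul _ _ _).symm

end Aux

/-- arithmetic core -/
lemma arith_core (C D nS x ε ε₁ nrm pab : ℝ) (N : ℕ)
    (hC : 1 ≤ C) (hD : 1 ≤ D) (hnS : 1 ≤ nS) (hx : 1 ≤ x)
    (hε : 0 < ε) (hε₁ : ε₁ ≤ 1) (hNe : (N + 1 : ℝ) * ε ≤ ε₁)
    (hnrm : 0 ≤ nrm) (hpab : 0 ≤ pab)
    (h1 : nrm ≤ C * x ^ ε * x)
    (h2 : x ≤ nS * (D * (C * x ^ ε) ^ N) * pab) :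
    (C ^ (N + 1) * D * nS)⁻¹ * nrm ^ (1 - ε₁) ≤ pab := by
  have hx0 : (0:ℝ) < x := lt_of_lt_of_le one_pos hx
  have hC0 : (0:ℝ) < C := lt_of_lt_of_le one_pos hC
  have hε₁0 : 0 < ε₁ := lt_of_lt_of_le (by positivity) hNe
  -- step 1: nrm ^ (1-ε₁) ≤ C * x ^ (1 - N*ε)
  have hxε : C * x ^ ε * x = C * x ^ (ε + 1) := by
    rw [Real.rpow_add hx0, Real.rpow_one, mul_assoc]
  have step1 : nrm ^ (1 - ε₁) ≤ C * x ^ (1 - (N:ℝ) * ε) := by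
    have e0 : (0:ℝ) ≤ 1 - ε₁ := by linarith
    have b1 : nrm ^ (1 - ε₁) ≤ (C * x ^ (ε + 1)) ^ (1 - ε₁) := by
      rw [← hxε]; exact Real.rpow_le_rpow hnrm h1 e0
    have b2 : (C * x ^ (ε + 1)) ^ (1 - ε₁)
        = C ^ (1 - ε₁) * x ^ ((ε + 1) * (1 - ε₁)) := by
      rw [Real.mul_rpow hC0.le (Real.rpow_nonneg hx0.le _), ← Real.rpow_mul hx0.le]
    have b3 : C ^ (1 - ε₁) ≤ C := by
      calc C ^ (1 - ε₁) ≤ C ^ (1:ℝ) :=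
            Real.rpow_le_rpow_of_exponent_le hC (by linarith)
        _ = C := Real.rpow_one C
    have b4 : x ^ ((ε + 1) * (1 - ε₁)) ≤ x ^ (1 - (N:ℝ) * ε) := by
      apply Real.rpow_le_rpow_of_exponent_le hx
      nlinarith [mul_nonneg hε.le hε₁0.le]
    calc nrm ^ (1 - ε₁) ≤ C ^ (1 - ε₁) * x ^ ((ε + 1) * (1 - ε₁)) := b2 ▸ b1
      _ ≤ C * x ^ (1 - (N:ℝ) * ε) :=
          mul_le_mul b3 b4 (Real.rpow_nonneg hx0.le _) hC0.le
  -- step 2: rewrite h2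
  have hpow : (C * x ^ ε) ^ N = C ^ N * x ^ ((N:ℝ) * ε) := by
    rw [mul_pow, ← Real.rpow_natCast (x ^ ε) N, ← Real.rpow_mul hx0.le,
      mul_comm ε (N:ℝ)]
  have ht0 : (0:ℝ) < x ^ ((N:ℝ) * ε) := Real.rpow_pos_of_pos hx0 _
  have hsplit : x ^ (1 - (N:ℝ) * ε) * x ^ ((N:ℝ) * ε) = x := by
    rw [← Real.rpow_add hx0]; norm_num
  have step2 : x ^ (1 - (N:ℝ) * ε) ≤ nS * D * C ^ N * pab := by
    rw [hpow] at h2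
    rw [← mul_le_mul_iff_of_pos_right ht0]
    calc x ^ (1 - (N:ℝ) * ε) * x ^ ((N:ℝ) * ε) = x := hsplit
      _ ≤ nS * (D * (C ^ N * x ^ ((N:ℝ) * ε))) * pab := h2
      _ = nS * D * C ^ N * pab * x ^ ((N:ℝ) * ε) := by ring
  -- combine
  have hpos : (0:ℝ) < C ^ (N + 1) * D * nS := by positivity
  rw [inv_mul_le_iff₀ hpos]
  calc nrm ^ (1 - ε₁) ≤ C * x ^ (1 - (N:ℝ) * ε) := step1
    _ ≤ C * (nS * D * C ^ N * pab) :=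
        mul_le_mul_of_nonneg_left step2 hC0.le
    _ = C ^ (N + 1) * D * nS * pab := by ring

/-- for a pair (π,τ) of weak dual Roth type with accelerated backward
times (indexed here by `hatn j = n̂_{-j}`, so `hatn 0 = 0` and `hatn` is strictly
decreasing), assuming condition (a) and that every block of `2d-3` consecutive
accelerated steps has all entries of its matrix ≥ 1, one has for all ε > 0 a
constant `C'(ε) > 0` with `max(1, B(m,0)_{αβ}) ≥ C' ‖B(m,0)‖^{1-ε}` for all `m ≤ 0`. -/
theorem stmt_10 {A : Type*} [Fintype A] [DecidableEq A] [Nonempty A]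
    (d : ℕ) (hd : 2 ≤ d) (hcard : Fintype.card A = d)
    (Bc : ℤ → ℤ → Matrix A A ℝ)
    (hnonneg : ∀ m n α β, 0 ≤ Bc m n α β)
    (hid : ∀ n, Bc n n = 1)
    (hcoc : ∀ p m n : ℤ, p ≤ m → m ≤ n → n ≤ 0 → Bc p n = Bc m n * Bc p m)
    (hmono : ∀ m m' : ℤ, m' ≤ m → m ≤ 0 → ∀ α β, Bc m 0 α β ≤ Bc m' 0 α β)
    (hatn : ℕ → ℤ) (h0 : hatn 0 = 0) (hdec : StrictAnti hatn)
    -- completeness: all entries of any (2d-3)-block are ≥ 1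
    (hpos : ∀ j : ℕ, ∀ α β, 1 ≤ Bc (hatn (j + (2 * d - 3))) (hatn j) α β)
    -- dual Roth condition (a)
    (ha : ∀ ε : ℝ, 0 < ε → ∃ C : ℝ, 0 < C ∧ ∀ j : ℕ,
      sumNorm (Bc (hatn (j + 1)) (hatn j)) ≤ C * sumNorm (Bc (hatn j) 0) ^ ε) :
    ∀ ε : ℝ, 0 < ε → ∃ C' : ℝ, 0 < C' ∧ ∀ m : ℤ, m ≤ 0 → ∀ α β,
      C' * sumNorm (Bc m 0) ^ (1 - ε) ≤ max 1 (Bc m 0 α β) := by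
  -- basic facts
  set N := 2 * d - 3 with hN
  have hN1 : 1 ≤ N := by omega
  have hup : ∀ j, hatn j ≤ 0 := fun j => by
    rw [← h0]; exact hdec.antitone (Nat.zero_le j)
  -- every Bc m 0 with m ≤ 0 has sumNorm ≥ 1
  have hone : ∀ m : ℤ, m ≤ 0 → 1 ≤ sumNorm (Bc m 0) := by
    intro m hm
    obtain ⟨α₀⟩ := ‹Nonempty A›
    have h1 : (1:ℝ) = Bc 0 0 α₀ α₀ := by rw [hid]; simp
    calc (1:ℝ) = Bc 0 0 α₀ α₀ := h1
      _ ≤ Bc m 0 α₀ α₀ := hmono 0 m hm le_rfl α₀ α₀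
      _ ≤ sumNorm (Bc m 0) := entry_le_sumNorm (hnonneg m 0) α₀ α₀
  -- reduce to ε ≤ 1
  suffices H : ∀ ε : ℝ, 0 < ε → ε ≤ 1 → ∃ C' : ℝ, 0 < C' ∧ ∀ m : ℤ, m ≤ 0 → ∀ α β,
      C' * sumNorm (Bc m 0) ^ (1 - ε) ≤ max 1 (Bc m 0 α β) by
    intro ε hε
    obtain ⟨C', hC', hC'2⟩ := H (min ε 1) (lt_min hε one_pos) (min_le_right _ _)
    refine ⟨C', hC', fun m hm α β => ?_⟩
    refine le_trans ?_ (hC'2 m hm α β)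
    have := Real.rpow_le_rpow_of_exponent_le (hone m hm)
      (by have := min_le_left ε (1:ℝ); linarith : 1 - ε ≤ 1 - min ε 1)
    exact mul_le_mul_of_nonneg_left this hC'.le
  intro ε₁ hε₁ hε₁1
  set ε := ε₁ / (2 * (N + 1)) with hεdef
  have hε : 0 < ε := by positivity
  have hNe : ((N:ℝ) + 1) * ε ≤ ε₁ := by
    have hp : (0:ℝ) < (N:ℝ) + 1 := by positivity
    have he : ((N:ℝ) + 1) * (ε₁ / (2 * ((N:ℝ) + 1))) = ε₁ / 2 := by
      field_simp
    rw [hεdef, he]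
    linarith
  obtain ⟨C₀, hC₀, hCa⟩ := ha ε hε
  set C := max C₀ 1 with hCdef
  have hC1 : 1 ≤ C := le_max_right _ _
  have hCa' : ∀ j : ℕ, sumNorm (Bc (hatn (j + 1)) (hatn j)) ≤
      C * sumNorm (Bc (hatn j) 0) ^ ε := fun j =>
    le_trans (hCa j) (mul_le_mul_of_nonneg_right (le_max_left _ _)
      (Real.rpow_nonneg (sumNorm_nonneg _) _))
  set D := sumNorm (1 : Matrix A A ℝ) with hD
  have hD1 : 1 ≤ D := by
    have := hone 0 le_rfl; rwa [hid 0] at this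
  set nS := sumNorm (Bc (hatn N) 0) with hnS
  have hnS1 : 1 ≤ nS := hone _ (hup N)
  set M := sumNorm (Bc (hatn (2 * N)) 0) with hM
  have hM1 : 1 ≤ M := hone _ (hup _)
  refine ⟨min ((C ^ (N + 1) * D * nS)⁻¹) M⁻¹, lt_min (by positivity) (by positivity),
    fun m hm α β => ?_⟩
  -- find the maximal k with m ≤ hatn k
  have hbelow : ∀ j : ℕ, hatn j ≤ -(j:ℤ) := by
    intro j
    induction j with
    | zero => simp [h0]
    | succ n ih =>
      have h2 := hdec (show n < n + 1 by omega)
      push_cast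
      omega
  have hex : ∃ j : ℕ, hatn j < m := by
    refine ⟨(1 - m).toNat, lt_of_le_of_lt (hbelow _) ?_⟩
    have : ((1 - m).toNat : ℤ) = 1 - m := Int.toNat_of_nonneg (by omega)
    omega
  classical
  set K := Nat.find hex with hK
  have hKspec : hatn K < m := Nat.find_spec hex
  have hKne : K ≠ 0 := by
    intro h
    rw [h, h0] at hKspec; omega
  obtain ⟨k, hk⟩ : ∃ k, K = k + 1 := ⟨K - 1, by omega⟩
  have hmk : m ≤ hatn k := by
    have := Nat.find_min hex (m := k) (by omega)
    omega
  have hk1 : hatn (k + 1) < m := by rw [← hk]; exact hKspec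
  -- norm of Bc m 0 entries nonneg
  have hBm := hnonneg m 0
  by_cases hcase : 2 * N ≤ k
  · -- main case
    obtain ⟨k', rfl⟩ : ∃ k', k = k' + N := ⟨k - N, by omega⟩
    have hk'N : N ≤ k' := by omega
    set x := sumNorm (Bc (hatn (k' + N)) 0) with hx
    have hx1 : 1 ≤ x := hone _ (hup _)
    -- norms of blocks
    have key : ∀ n j : ℕ, j + n ≤ k' + N →
        sumNorm (Bc (hatn (j + n)) (hatn j)) ≤ D * (C * x ^ ε) ^ n := by
      intro n
      induction n with
      | zero => intro j _; simp only [Nat.add_zero, hid, pow_zero, mul_one, le_refl]; exact le_rfl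
      | succ n ih =>
        intro j hj
        have e1 : Bc (hatn (j + (n + 1))) (hatn j)
            = Bc (hatn (j + n)) (hatn j) * Bc (hatn (j + n + 1)) (hatn (j + n)) := by
          have : j + (n + 1) = (j + n) + 1 := by omega
          rw [this]
          exact hcoc _ _ _ (hdec (Nat.lt_succ_self _)).le
            (hdec.antitone (Nat.le_add_right j n)) (hup j)
        have hblock : sumNorm (Bc (hatn (j + n + 1)) (hatn (j + n))) ≤ C * x ^ ε := by
          refine le_trans (hCa' (j + n)) ?_
          refine mul_le_mul_of_nonneg_left ?_ (by positivity)
          refine Real.rpow_le_rpow (sumNorm_nonneg _) ?_ hε.le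
          refine sumNorm_mono (hnonneg _ _) (fun α β => ?_)
          exact hmono (hatn (j + n)) (hatn (k' + N))
            (hdec.antitone (by omega)) (hup _) α β
        calc sumNorm (Bc (hatn (j + (n + 1))) (hatn j))
            ≤ sumNorm (Bc (hatn (j + n)) (hatn j)) *
              sumNorm (Bc (hatn (j + n + 1)) (hatn (j + n))) := by
              rw [e1]; exact sumNorm_mul_le (hnonneg _ _) (hnonneg _ _)
          _ ≤ (D * (C * x ^ ε) ^ n) * (C * x ^ ε) := by
              refine mul_le_mul (ih j (by omega)) hblock (sumNorm_nonneg _) ?_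
              positivity
          _ = D * (C * x ^ ε) ^ (n + 1) := by ring
    -- decompositions
    set L := Bc (hatn k') 0 with hL
    set Q := Bc (hatn (k' + N)) (hatn k') with hQm
    set S := Bc (hatn N) 0 with hS
    set T := Bc (hatn k') (hatn N) with hT
    have hLQ : Bc (hatn (k' + N)) 0 = L * Q :=
      hcoc _ _ _ (hdec.antitone (Nat.le_add_right _ _)) (hup k') le_rfl
    have hST : L = S * T :=
      hcoc _ _ _ (hdec.antitone hk'N) (hup N) le_rfl
    have hQbound : sumNorm Q ≤ D * (C * x ^ ε) ^ N := key N k' le_rfl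
    have hS1 : ∀ α' β', 1 ≤ S α' β' := by
      intro α' β'
      have := hpos 0 α' β'
      rw [Nat.zero_add, h0] at this
      exact this
    have hQ1 : ∀ α' β', 1 ≤ Q α' β' := hpos k'
    -- row sums of L dominate sumNorm T
    have hrow : sumNorm T ≤ ∑ γ, L α γ := by
      rw [sumNorm_eq (hnonneg _ _)]
      rw [hST]
      calc ∑ γ, ∑ β', T γ β' = ∑ β', ∑ γ, T γ β' := Finset.sum_comm
        _ ≤ ∑ β', ∑ γ, S α γ * T γ β' := by
            refine Finset.sum_le_sum fun β' _ => Finset.sum_le_sum fun γ _ => ?_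
            nth_rewrite 1 [← one_mul (T γ β')]
            exact mul_le_mul_of_nonneg_right (hS1 α γ) (hnonneg _ _ γ β')
        _ = ∑ γ, (S * T) α γ := by
            exact Finset.sum_congr rfl fun β' _ => by rw [Matrix.mul_apply]
    -- entry lower bound
    have hentry : ∑ γ, L α γ ≤ Bc m 0 α β := by
      calc ∑ γ, L α γ = ∑ γ, L α γ * 1 := by simp
        _ ≤ ∑ γ, L α γ * Q γ β :=
            Finset.sum_le_sum fun γ _ =>
              mul_le_mul_of_nonneg_left (hQ1 γ β) (hnonneg _ _ α γ)
        _ = (L * Q) α β := (Matrix.mul_apply).symm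
        _ = Bc (hatn (k' + N)) 0 α β := by rw [hLQ]
        _ ≤ Bc m 0 α β := hmono (hatn (k' + N)) m hmk (hup _) α β
    -- x ≤ nS * (D * (C x^ε)^N) * Bc m 0 α β
    have hLnorm : sumNorm L ≤ nS * sumNorm T := by
      rw [hST]; exact sumNorm_mul_le (hnonneg _ _) (hnonneg _ _)
    have hxle : x ≤ sumNorm L * sumNorm Q := by
      rw [hx, hLQ]; exact sumNorm_mul_le (hnonneg _ _) (hnonneg _ _)
    have hTnn : 0 ≤ sumNorm T := sumNorm_nonneg _
    have h2 : x ≤ nS * (D * (C * x ^ ε) ^ N) * Bc m 0 α β := by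
      have hTP : sumNorm T ≤ Bc m 0 α β := le_trans hrow hentry
      calc x ≤ sumNorm L * sumNorm Q := hxle
        _ ≤ (nS * sumNorm T) * (D * (C * x ^ ε) ^ N) :=
            mul_le_mul hLnorm hQbound (sumNorm_nonneg _)
              (by positivity)
        _ = nS * (D * (C * x ^ ε) ^ N) * sumNorm T := by ring
        _ ≤ nS * (D * (C * x ^ ε) ^ N) * Bc m 0 α β := by
            refine mul_le_mul_of_nonneg_left hTP ?_
            positivity
    -- norm upper bound
    have h1 : sumNorm (Bc m 0) ≤ C * x ^ ε * x := by
      have e2 : Bc (hatn (k' + N + 1)) 0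
          = Bc (hatn (k' + N)) 0 * Bc (hatn (k' + N + 1)) (hatn (k' + N)) :=
        hcoc _ _ _ (hdec (Nat.lt_succ_self _)).le (hup _) le_rfl
      calc sumNorm (Bc m 0) ≤ sumNorm (Bc (hatn (k' + N + 1)) 0) := by
            refine sumNorm_mono (hnonneg _ _) (fun α' β' => ?_)
            exact hmono m (hatn (k' + N + 1)) hk1.le hm α' β'
        _ ≤ x * sumNorm (Bc (hatn (k' + N + 1)) (hatn (k' + N))) := by
            rw [e2]; exact sumNorm_mul_le (hnonneg _ _) (hnonneg _ _)
        _ ≤ x * (C * x ^ ε) :=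
            mul_le_mul_of_nonneg_left (hCa' (k' + N)) (by linarith)
        _ = C * x ^ ε * x := by ring
    -- conclude via arith_core
    have := arith_core C D nS x ε ε₁ (sumNorm (Bc m 0)) (Bc m 0 α β) N
      hC1 hD1 hnS1 hx1 hε hε₁1 hNe (sumNorm_nonneg _) (hnonneg _ _ _ _) h1 h2
    refine le_trans ?_ (le_trans this (le_max_right _ _))
    exact mul_le_mul_of_nonneg_right (min_le_left _ _)
      (Real.rpow_nonneg (sumNorm_nonneg _) _)
  · -- small case : k < 2N
    have hmlow : hatn (2 * N) ≤ m := by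
      have : hatn (2 * N) ≤ hatn (k + 1) := hdec.antitone (by omega)
      omega
    have hPM : sumNorm (Bc m 0) ≤ M := by
      refine sumNorm_mono (hnonneg _ _) (fun α' β' => ?_)
      exact hmono m (hatn (2 * N)) hmlow hm α' β'
    refine le_trans ?_ (le_max_left 1 (Bc m 0 α β))
    have hrpow : sumNorm (Bc m 0) ^ (1 - ε₁) ≤ M := by
      calc sumNorm (Bc m 0) ^ (1 - ε₁) ≤ M ^ (1 - ε₁) :=
            Real.rpow_le_rpow (sumNorm_nonneg _) hPM (by linarith)
        _ ≤ M ^ (1:ℝ) := Real.rpow_le_rpow_of_exponent_le hM1 (by linarith)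
        _ = M := Real.rpow_one M
    calc min ((C ^ (N + 1) * D * nS)⁻¹) M⁻¹ * sumNorm (Bc m 0) ^ (1 - ε₁)
        ≤ M⁻¹ * M := by
          refine mul_le_mul (min_le_right _ _) hrpow
            (Real.rpow_nonneg (sumNorm_nonneg _) _) (by positivity)
      _ = 1 := inv_mul_cancel₀ (by positivity)
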